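/- arXiv:1902.00920 — 5 statements merged into one kernel-verified Lean document; each statement's English description precedes it below -/
import Mathlib

section
/- Let M : ℕ × ℕ → ℂ be an infinite matrix all of whose rows and all of whose columns are square-summable. Then M defines a bounded operator on ℓ²(ℕ) if and only if sup_{n∈ℕ} ‖Pₙ (M*M) Pₙ‖ < ∞, where M*M is the infinite matrix with entries (M*M)_{jk} = ∑_l conj(M_{lj}) M_{lk} (these series converge absolutely by Cauchy–Schwarz). Moreover, when M defines a bounded operator T on ℓ²(ℕ), one has sup_{n∈ℕ} ‖Pₙ (M*M) Pₙ‖ = ‖T‖². -/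
open Filter Topology

noncomputable section

/-- `M` defines the bounded operator `T` on `ℓ²(ℕ)`: for every `x ∈ ℓ²(ℕ)` and every `j`,
`(T x)(j) = ∑_k M(j,k) x(k)`, the series converging absolutely. -/
def RepresentsMatrix (M : ℕ → ℕ → ℂ)
    (T : lp (fun _ : ℕ => ℂ) 2 →L[ℂ] lp (fun _ : ℕ => ℂ) 2) : Prop :=
  ∀ (x : lp (fun _ : ℕ => ℂ) 2) (j : ℕ),
    Summable (fun k => ‖M j k * x k‖) ∧ T x j = ∑' k, M j k * x k

/-- The operator norm `‖Pₙ A Pₙ‖` of the compression of the infinite matrix `A` to the span of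
`e_0, …, e_n`, computed as the operator norm of the corresponding `(n+1) × (n+1)` matrix acting
on Euclidean space. -/
def truncNorm (A : ℕ → ℕ → ℂ) (n : ℕ) : ℝ :=
  ‖Matrix.toEuclideanCLM (𝕜 := ℂ) (Matrix.of fun i j : Fin (n + 1) => A i j)‖

/-- The infinite matrix `M*M`, with entries `(M*M)_{jk} = ∑_l conj(M_{lj}) M_{lk}`. -/
def adjMulMatrix (M : ℕ → ℕ → ℂ) : ℕ → ℕ → ℂ :=
  fun j k => ∑' l, (starRingEnd ℂ) (M l j) * M l k

open ENNReal

abbrev H := lp (fun _ : ℕ => ℂ) 2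

local notation "⟪" x ", " y "⟫" => inner (𝕜 := ℂ) x y

lemma rpow_toReal_two (x : ℝ) : x ^ (2 : ℝ≥0∞).toReal = x ^ 2 := by
  rw [ENNReal.toReal_ofNat, show ((2:ℝ)) = ((2:ℕ):ℝ) by norm_num, Real.rpow_natCast]

lemma memℓp_two_iff (f : ℕ → ℂ) : Memℓp f 2 ↔ Summable fun k => ‖f k‖ ^ 2 := by
  rw [memℓp_gen_iff (by norm_num [ENNReal.toReal_ofNat] : (0:ℝ) < (2:ℝ≥0∞).toReal)]
  simp [rpow_toReal_two]

lemma summable_norm_sq (x : H) : Summable fun k => ‖x k‖ ^ 2 :=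
  (memℓp_two_iff _).1 (lp.memℓp x)

lemma norm_sq_eq_tsum (x : H) : ‖x‖ ^ 2 = ∑' k, ‖x k‖ ^ 2 := by
  have := lp.norm_rpow_eq_tsum (p := 2)
    (by norm_num [ENNReal.toReal_ofNat] : (0:ℝ) < (2:ℝ≥0∞).toReal) x
  simpa [rpow_toReal_two] using this

variable {M : ℕ → ℕ → ℂ}

lemma summable_row_mul (hrow : ∀ j, Summable fun k => ‖M j k‖ ^ 2)
    (hx : Summable fun k : ℕ => ‖(x : ℕ → ℂ) k‖ ^ 2) (j : ℕ) :
    Summable fun k => ‖M j k * x k‖ := by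
  refine Summable.of_nonneg_of_le (fun k => norm_nonneg _)
    (fun k => ?_) (((hrow j).add hx).div_const 2)
  rw [norm_mul]
  nlinarith [sq_nonneg (‖M j k‖ - ‖x k‖), norm_nonneg (M j k), norm_nonneg (x k)]

/-- The `k`-th column of `M` as an element of `ℓ²`. -/
def col (M : ℕ → ℕ → ℂ) (hcol : ∀ k, Summable fun j => ‖M j k‖ ^ 2) (k : ℕ) : H :=
  ⟨fun l => M l k, (memℓp_two_iff _).2 (hcol k)⟩

lemma col_apply (hcol : ∀ k, Summable fun j => ‖M j k‖ ^ 2) (k l : ℕ) :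
    (col M hcol k : ℕ → ℂ) l = M l k := rfl

lemma inner_col_col (hcol : ∀ k, Summable fun j => ‖M j k‖ ^ 2) (i j : ℕ) :
    ⟪col M hcol i, col M hcol j⟫ = adjMulMatrix M i j := by
  rw [lp.inner_eq_tsum, adjMulMatrix]
  exact tsum_congr fun l => mul_comm _ _

/-- The operator `EuclideanSpace ℂ (Fin (n+1)) → ℓ²` sending `y` to the combination of the
first `n+1` columns of `M`. -/
def Slin (M : ℕ → ℕ → ℂ) (hcol : ∀ k, Summable fun j => ‖M j k‖ ^ 2) (n : ℕ) :
    EuclideanSpace ℂ (Fin (n + 1)) →ₗ[ℂ] H where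
  toFun y := ∑ k : Fin (n + 1), y k • col M hcol k
  map_add' y z := by
    simp [add_smul, Finset.sum_add_distrib]
  map_smul' c y := by
    simp [smul_smul, Finset.smul_sum]

def Sop (M : ℕ → ℕ → ℂ) (hcol : ∀ k, Summable fun j => ‖M j k‖ ^ 2) (n : ℕ) :
    EuclideanSpace ℂ (Fin (n + 1)) →L[ℂ] H :=
  LinearMap.toContinuousLinearMap (Slin M hcol n)

lemma Sop_apply_coord (hcol : ∀ k, Summable fun j => ‖M j k‖ ^ 2) (n : ℕ)
    (y : EuclideanSpace ℂ (Fin (n + 1))) (l : ℕ) :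
    (Sop M hcol n y : ℕ → ℂ) l = ∑ k : Fin (n + 1), M l k * y k := by
  show ((∑ k : Fin (n + 1), y k • col M hcol k : H) : ℕ → ℂ) l = _
  rw [lp.coeFn_sum, Finset.sum_apply]
  simp [col_apply, mul_comm]

lemma inner_Sop_Sop (hcol : ∀ k, Summable fun j => ‖M j k‖ ^ 2) (n : ℕ)
    (v y : EuclideanSpace ℂ (Fin (n + 1))) :
    ⟪Sop M hcol n v, Sop M hcol n y⟫ =
      ∑ i : Fin (n + 1), ∑ j : Fin (n + 1),
        (starRingEnd ℂ) (v i) * (adjMulMatrix M i j * y j) := by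
  show ⟪∑ i : Fin (n + 1), v i • col M hcol i,
      ∑ j : Fin (n + 1), y j • col M hcol j⟫ = _
  rw [sum_inner]
  refine Finset.sum_congr rfl fun i _ => ?_
  rw [inner_sum]
  refine Finset.sum_congr rfl fun j _ => ?_
  rw [inner_smul_left, inner_smul_right, inner_col_col]
  ring

lemma toEuclideanCLM_eq (hcol : ∀ k, Summable fun j => ‖M j k‖ ^ 2) (n : ℕ) :
    Matrix.toEuclideanCLM (𝕜 := ℂ)
        (Matrix.of fun i j : Fin (n + 1) => adjMulMatrix M i j) =
      ContinuousLinearMap.adjoint (Sop M hcol n) ∘L Sop M hcol n := by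
  refine ContinuousLinearMap.ext fun y => ?_
  refine ext_inner_left ℂ fun v => ?_
  rw [ContinuousLinearMap.comp_apply, ContinuousLinearMap.adjoint_inner_right, inner_Sop_Sop,
    PiLp.inner_apply]
  refine Finset.sum_congr rfl fun i _ => ?_
  simp only [RCLike.inner_apply]
  have : (Matrix.toEuclideanCLM (𝕜 := ℂ)
      (Matrix.of fun i j : Fin (n + 1) => adjMulMatrix M i j) y) i
      = ∑ j : Fin (n + 1), adjMulMatrix M i j * y j := rfl
  rw [this, Finset.sum_mul]
  exact Finset.sum_congr rfl fun j _ => mul_comm _ _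

lemma truncNorm_eq (hcol : ∀ k, Summable fun j => ‖M j k‖ ^ 2) (n : ℕ) :
    truncNorm (adjMulMatrix M) n = ‖Sop M hcol n‖ ^ 2 := by
  rw [truncNorm, toEuclideanCLM_eq hcol n, ContinuousLinearMap.norm_adjoint_comp_self, sq]

lemma norm_Sop_sq_le (hcol : ∀ k, Summable fun j => ‖M j k‖ ^ 2) (n : ℕ)
    (y : EuclideanSpace ℂ (Fin (n + 1))) :
    ‖Sop M hcol n y‖ ^ 2 ≤ truncNorm (adjMulMatrix M) n * ‖y‖ ^ 2 := by
  set B := Matrix.toEuclideanCLM (𝕜 := ℂ)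
    (Matrix.of fun i j : Fin (n + 1) => adjMulMatrix M i j) with hB
  have h1 : ⟪Sop M hcol n y, Sop M hcol n y⟫ = ⟪y, B y⟫ := by
    rw [hB, toEuclideanCLM_eq hcol n, ContinuousLinearMap.comp_apply,
      ContinuousLinearMap.adjoint_inner_right]
  have h2 : ‖Sop M hcol n y‖ ^ 2 = ‖⟪y, B y⟫‖ := by
    rw [← h1, inner_self_eq_norm_sq_to_K]
    simp
  rw [h2]
  calc ‖⟪y, B y⟫‖ ≤ ‖y‖ * ‖B y‖ := norm_inner_le_norm _ _
    _ ≤ ‖y‖ * (‖B‖ * ‖y‖) := by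
        have := B.le_opNorm y
        nlinarith [norm_nonneg y, norm_nonneg (B y)]
    _ = truncNorm (adjMulMatrix M) n * ‖y‖ ^ 2 := by rw [truncNorm, ← hB]; ring

def embFun (n : ℕ) (y : EuclideanSpace ℂ (Fin (n + 1))) : ℕ → ℂ :=
  fun m => if h : m < n + 1 then y ⟨m, h⟩ else 0

def emb (n : ℕ) (y : EuclideanSpace ℂ (Fin (n + 1))) : H :=
  ∑ m ∈ Finset.range (n + 1), lp.single 2 m (embFun n y m)

lemma emb_coe (n : ℕ) (y : EuclideanSpace ℂ (Fin (n + 1))) :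
    (emb n y : ℕ → ℂ) = embFun n y := by
  funext m
  rw [emb, lp.coeFn_sum, Finset.sum_apply]
  by_cases h : m < n + 1
  · rw [Finset.sum_eq_single_of_mem m (Finset.mem_range.2 h)]
    · exact lp.single_apply_self 2 m _
    · intro i _ hi
      exact lp.single_apply_ne 2 i _ (Ne.symm hi)
  · rw [Finset.sum_eq_zero, embFun, dif_neg h]
    intro i hi
    exact lp.single_apply_ne 2 i _ fun hmi => h (hmi ▸ Finset.mem_range.1 hi)

lemma norm_emb_sq (n : ℕ) (y : EuclideanSpace ℂ (Fin (n + 1))) :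
    ‖emb n y‖ ^ 2 = ‖y‖ ^ 2 := by
  have h := lp.norm_sum_single (p := 2)
    (by norm_num [ENNReal.toReal_ofNat] : (0:ℝ) < (2:ℝ≥0∞).toReal) (embFun n y)
    (Finset.range (n + 1))
  rw [← emb] at h
  rw [← rpow_toReal_two ‖emb n y‖, h]
  have h2 : ‖y‖ ^ 2 = ∑ i : Fin (n + 1), ‖y i‖ ^ 2 := by
    rw [EuclideanSpace.norm_eq, Real.sq_sqrt]
    positivity
  rw [h2, ← Fin.sum_univ_eq_sum_range (fun m => ‖embFun n y m‖ ^ (2 : ℝ≥0∞).toReal) (n + 1)]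
  refine Finset.sum_congr rfl fun i _ => ?_
  rw [rpow_toReal_two, embFun, dif_pos i.isLt, Fin.eta]

lemma norm_emb (n : ℕ) (y : EuclideanSpace ℂ (Fin (n + 1))) : ‖emb n y‖ = ‖y‖ := by
  have := norm_emb_sq n y
  nlinarith [norm_nonneg (emb n y), norm_nonneg y]

lemma T_emb (hrow : ∀ j, Summable fun k => ‖M j k‖ ^ 2)
    (hcol : ∀ k, Summable fun j => ‖M j k‖ ^ 2)
    {T : H →L[ℂ] H} (hT : RepresentsMatrix M T) (n : ℕ)
    (y : EuclideanSpace ℂ (Fin (n + 1))) :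
    T (emb n y) = Sop M hcol n y := by
  refine lp.ext (funext fun j => ?_)
  rw [(hT (emb n y) j).2, Sop_apply_coord]
  have hsupp : ∀ k ∉ Finset.range (n + 1), M j k * (emb n y : ℕ → ℂ) k = 0 := by
    intro k hk
    rw [emb_coe, embFun, dif_neg (fun h => hk (Finset.mem_range.2 h)), mul_zero]
  rw [tsum_eq_sum hsupp,
    ← Fin.sum_univ_eq_sum_range (fun k => M j k * (emb n y : ℕ → ℂ) k) (n + 1)]
  refine Finset.sum_congr rfl fun i _ => ?_
  rw [emb_coe, embFun, dif_pos i.isLt, Fin.eta]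

lemma norm_Sop_le (hrow : ∀ j, Summable fun k => ‖M j k‖ ^ 2)
    (hcol : ∀ k, Summable fun j => ‖M j k‖ ^ 2)
    {T : H →L[ℂ] H} (hT : RepresentsMatrix M T) (n : ℕ) :
    ‖Sop M hcol n‖ ≤ ‖T‖ := by
  refine ContinuousLinearMap.opNorm_le_bound _ (norm_nonneg T) fun y => ?_
  rw [← T_emb hrow hcol hT n y, ← norm_emb n y]
  exact T.le_opNorm _

lemma truncNorm_le (hrow : ∀ j, Summable fun k => ‖M j k‖ ^ 2)
    (hcol : ∀ k, Summable fun j => ‖M j k‖ ^ 2)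
    {T : H →L[ℂ] H} (hT : RepresentsMatrix M T) (n : ℕ) :
    truncNorm (adjMulMatrix M) n ≤ ‖T‖ ^ 2 := by
  rw [truncNorm_eq hcol n]
  exact pow_le_pow_left₀ (norm_nonneg _) (norm_Sop_le hrow hcol hT n) 2

def coordVec (n : ℕ) (x : H) : EuclideanSpace ℂ (Fin (n + 1)) :=
  (WithLp.equiv 2 (Fin (n + 1) → ℂ)).symm fun k => x k

lemma coordVec_apply (n : ℕ) (x : H) (k : Fin (n + 1)) : coordVec n x k = x k := rfl

lemma emb_coordVec (n : ℕ) (x : H) :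
    emb n (coordVec n x) = ∑ m ∈ Finset.range (n + 1), lp.single 2 m (x m) := by
  refine Finset.sum_congr rfl fun m hm => ?_
  rw [embFun, dif_pos (Finset.mem_range.1 hm)]
  rfl

lemma tendsto_trunc (x : H) :
    Tendsto (fun n => emb n (coordVec n x)) atTop (𝓝 x) := by
  have h := (lp.hasSum_single (E := fun _ : ℕ => ℂ) (p := 2)
    (by norm_num) x).tendsto_sum_nat
  have h2 := h.comp (tendsto_add_atTop_nat 1)
  simp only [Function.comp_def] at h2
  convert h2 using 2 with n
  exact emb_coordVec n x

lemma norm_coordVec_sq_le (n : ℕ) (x : H) : ‖coordVec n x‖ ^ 2 ≤ ‖x‖ ^ 2 := by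
  have h1 : ‖coordVec n x‖ ^ 2 = ∑ i : Fin (n + 1), ‖x i‖ ^ 2 := by
    rw [EuclideanSpace.norm_eq, Real.sq_sqrt (by positivity)]
    rfl
  rw [h1, norm_sq_eq_tsum,
    Fin.sum_univ_eq_sum_range (fun m => ‖x m‖ ^ 2) (n + 1)]
  exact Summable.sum_le_tsum _ (fun k _ => by positivity) (summable_norm_sq x)

lemma Sop_coordVec_coord (hcol : ∀ k, Summable fun j => ‖M j k‖ ^ 2) (n : ℕ)
    (x : H) (j : ℕ) :
    (Sop M hcol n (coordVec n x) : ℕ → ℂ) j = ∑ k ∈ Finset.range (n + 1), M j k * x k := by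
  rw [Sop_apply_coord, ← Fin.sum_univ_eq_sum_range (fun k => M j k * x k) (n + 1)]
  rfl

lemma truncNorm_nonneg (A : ℕ → ℕ → ℂ) (n : ℕ) : 0 ≤ truncNorm A n := norm_nonneg _

lemma opNorm_sq_le (hrow : ∀ j, Summable fun k => ‖M j k‖ ^ 2)
    (hcol : ∀ k, Summable fun j => ‖M j k‖ ^ 2)
    {T : H →L[ℂ] H} (hT : RepresentsMatrix M T)
    (hb : BddAbove (Set.range fun n => truncNorm (adjMulMatrix M) n)) :
    ‖T‖ ^ 2 ≤ ⨆ n, truncNorm (adjMulMatrix M) n := by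
  set C := ⨆ n, truncNorm (adjMulMatrix M) n with hC
  have hC0 : 0 ≤ C := le_ciSup_of_le hb 0 (truncNorm_nonneg _ 0)
  have key : ∀ x : H, ‖T x‖ ^ 2 ≤ C * ‖x‖ ^ 2 := by
    intro x
    have hTn : Tendsto (fun n => ‖T (emb n (coordVec n x))‖ ^ 2) atTop (𝓝 (‖T x‖ ^ 2)) := by
      exact (((T.continuous.tendsto x).comp (tendsto_trunc x)).norm.pow 2)
    refine le_of_tendsto hTn (Eventually.of_forall fun n => ?_)
    rw [T_emb hrow hcol hT]
    calc ‖Sop M hcol n (coordVec n x)‖ ^ 2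
        ≤ truncNorm (adjMulMatrix M) n * ‖coordVec n x‖ ^ 2 := norm_Sop_sq_le hcol n _
      _ ≤ C * ‖x‖ ^ 2 := by
          have h1 : truncNorm (adjMulMatrix M) n ≤ C := le_ciSup hb n
          have h2 := norm_coordVec_sq_le n x
          nlinarith [truncNorm_nonneg (adjMulMatrix M) n, sq_nonneg ‖coordVec n x‖]
  have hTle : ‖T‖ ≤ Real.sqrt C := by
    refine T.opNorm_le_bound (Real.sqrt_nonneg _) fun x => ?_
    calc ‖T x‖ = Real.sqrt (‖T x‖ ^ 2) := (Real.sqrt_sq (norm_nonneg _)).symm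
      _ ≤ Real.sqrt (C * ‖x‖ ^ 2) := Real.sqrt_le_sqrt (key x)
      _ = Real.sqrt C * ‖x‖ := by
          rw [Real.sqrt_mul hC0, Real.sqrt_sq (norm_nonneg _)]
  calc ‖T‖ ^ 2 ≤ Real.sqrt C ^ 2 := pow_le_pow_left₀ (norm_nonneg _) hTle 2
    _ = C := Real.sq_sqrt hC0

lemma partial_tsum_tendsto (hrow : ∀ j, Summable fun k => ‖M j k‖ ^ 2) (x : H) (j : ℕ) :
    Tendsto (fun n => ∑ k ∈ Finset.range (n + 1), M j k * x k) atTop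
      (𝓝 (∑' k, M j k * x k)) := by
  have hs : Summable fun k => M j k * x k :=
    Summable.of_norm (summable_row_mul hrow (summable_norm_sq x) j)
  exact hs.hasSum.tendsto_sum_nat.comp (tendsto_add_atTop_nat 1)

lemma sum_sq_bound (hrow : ∀ j, Summable fun k => ‖M j k‖ ^ 2)
    (hcol : ∀ k, Summable fun j => ‖M j k‖ ^ 2)
    (hb : BddAbove (Set.range fun n => truncNorm (adjMulMatrix M) n))
    (x : H) (s : Finset ℕ) :
    ∑ j ∈ s, ‖∑' k, M j k * x k‖ ^ 2 ≤ (⨆ n, truncNorm (adjMulMatrix M) n) * ‖x‖ ^ 2 := by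
  set C := ⨆ n, truncNorm (adjMulMatrix M) n with hC
  have htend : Tendsto (fun n => ∑ j ∈ s, ‖(Sop M hcol n (coordVec n x) : ℕ → ℂ) j‖ ^ 2)
      atTop (𝓝 (∑ j ∈ s, ‖∑' k, M j k * x k‖ ^ 2)) := by
    refine tendsto_finset_sum _ fun j _ => ?_
    have := (partial_tsum_tendsto hrow x j).norm.pow 2
    refine this.congr fun n => ?_
    rw [Sop_coordVec_coord hcol n x j]
  refine le_of_tendsto htend (Eventually.of_forall fun n => ?_)
  have h1 : ∑ j ∈ s, ‖(Sop M hcol n (coordVec n x) : ℕ → ℂ) j‖ ^ 2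
      ≤ ‖Sop M hcol n (coordVec n x)‖ ^ 2 := by
    have := lp.sum_rpow_le_norm_rpow (p := 2)
      (by norm_num [ENNReal.toReal_ofNat] : (0:ℝ) < (2:ℝ≥0∞).toReal)
      (Sop M hcol n (coordVec n x)) s
    simpa [rpow_toReal_two] using this
  refine h1.trans ?_
  calc ‖Sop M hcol n (coordVec n x)‖ ^ 2
      ≤ truncNorm (adjMulMatrix M) n * ‖coordVec n x‖ ^ 2 := norm_Sop_sq_le hcol n _
    _ ≤ C * ‖x‖ ^ 2 := by
        have h1 : truncNorm (adjMulMatrix M) n ≤ C := le_ciSup hb n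
        have h2 := norm_coordVec_sq_le n x
        nlinarith [truncNorm_nonneg (adjMulMatrix M) n, sq_nonneg ‖coordVec n x‖]

lemma memℓp_Tfun (hrow : ∀ j, Summable fun k => ‖M j k‖ ^ 2)
    (hcol : ∀ k, Summable fun j => ‖M j k‖ ^ 2)
    (hb : BddAbove (Set.range fun n => truncNorm (adjMulMatrix M) n)) (x : H) :
    Memℓp (fun j => ∑' k, M j k * x k) 2 :=
  (memℓp_two_iff _).2 <| by
    refine summable_of_sum_le (c := (⨆ n, truncNorm (adjMulMatrix M) n) * ‖x‖ ^ 2)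
      (fun j => by positivity) fun s => sum_sq_bound hrow hcol hb x s

def Tlin (M : ℕ → ℕ → ℂ) (hrow : ∀ j, Summable fun k => ‖M j k‖ ^ 2)
    (hcol : ∀ k, Summable fun j => ‖M j k‖ ^ 2)
    (hb : BddAbove (Set.range fun n => truncNorm (adjMulMatrix M) n)) :
    H →ₗ[ℂ] H where
  toFun x := ⟨fun j => ∑' k, M j k * x k, memℓp_Tfun hrow hcol hb x⟩
  map_add' x y := by
    refine lp.ext (funext fun j => ?_)
    have hx : Summable fun k => M j k * x k :=
      Summable.of_norm (summable_row_mul hrow (summable_norm_sq x) j)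
    have hy : Summable fun k => M j k * y k :=
      Summable.of_norm (summable_row_mul hrow (summable_norm_sq y) j)
    show ∑' k, M j k * (x + y) k = (∑' k, M j k * x k) + ∑' k, M j k * y k
    rw [← Summable.tsum_add hx hy]
    refine tsum_congr fun k => ?_
    rw [lp.coeFn_add, Pi.add_apply, mul_add]
  map_smul' c x := by
    refine lp.ext (funext fun j => ?_)
    show ∑' k, M j k * (c • x) k = c * ∑' k, M j k * x k
    rw [← tsum_mul_left]
    refine tsum_congr fun k => ?_
    rw [lp.coeFn_smul, Pi.smul_apply, smul_eq_mul]
    ring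

lemma Tlin_norm_le (hrow : ∀ j, Summable fun k => ‖M j k‖ ^ 2)
    (hcol : ∀ k, Summable fun j => ‖M j k‖ ^ 2)
    (hb : BddAbove (Set.range fun n => truncNorm (adjMulMatrix M) n)) (x : H) :
    ‖Tlin M hrow hcol hb x‖ ≤ Real.sqrt (⨆ n, truncNorm (adjMulMatrix M) n) * ‖x‖ := by
  set C := ⨆ n, truncNorm (adjMulMatrix M) n with hC
  have hC0 : 0 ≤ C := le_ciSup_of_le hb 0 (truncNorm_nonneg _ 0)
  have hsq : ‖Tlin M hrow hcol hb x‖ ^ 2 ≤ C * ‖x‖ ^ 2 := by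
    rw [norm_sq_eq_tsum]
    refine Summable.tsum_le_of_sum_le ?_ fun s => ?_
    · exact (memℓp_two_iff _).1 (lp.memℓp (Tlin M hrow hcol hb x))
    · exact sum_sq_bound hrow hcol hb x s
  calc ‖Tlin M hrow hcol hb x‖ = Real.sqrt (‖Tlin M hrow hcol hb x‖ ^ 2) :=
        (Real.sqrt_sq (norm_nonneg _)).symm
    _ ≤ Real.sqrt (C * ‖x‖ ^ 2) := Real.sqrt_le_sqrt hsq
    _ = Real.sqrt C * ‖x‖ := by rw [Real.sqrt_mul hC0, Real.sqrt_sq (norm_nonneg _)]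

def TopM (M : ℕ → ℕ → ℂ) (hrow : ∀ j, Summable fun k => ‖M j k‖ ^ 2)
    (hcol : ∀ k, Summable fun j => ‖M j k‖ ^ 2)
    (hb : BddAbove (Set.range fun n => truncNorm (adjMulMatrix M) n)) : H →L[ℂ] H :=
  (Tlin M hrow hcol hb).mkContinuous _ (Tlin_norm_le hrow hcol hb)

lemma Top_represents (hrow : ∀ j, Summable fun k => ‖M j k‖ ^ 2)
    (hcol : ∀ k, Summable fun j => ‖M j k‖ ^ 2)
    (hb : BddAbove (Set.range fun n => truncNorm (adjMulMatrix M) n)) :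
    RepresentsMatrix M (TopM M hrow hcol hb) := fun x j =>
  ⟨summable_row_mul hrow (summable_norm_sq x) j, rfl⟩


/-- Crone's Lemma (Lemma 5.2): an infinite matrix with square-summable rows and columns defines a
bounded operator on `ℓ²(ℕ)` iff `sup_n ‖Pₙ (M*M) Pₙ‖ < ∞`, and in that case
`sup_n ‖Pₙ (M*M) Pₙ‖ = ‖T‖²`. -/
theorem crone_lemma (M : ℕ → ℕ → ℂ)
    (hrow : ∀ j, Summable fun k => ‖M j k‖ ^ 2)
    (hcol : ∀ k, Summable fun j => ‖M j k‖ ^ 2) :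
    ((∃ T, RepresentsMatrix M T) ↔
        BddAbove (Set.range fun n => truncNorm (adjMulMatrix M) n)) ∧
      ∀ T, RepresentsMatrix M T → (⨆ n, truncNorm (adjMulMatrix M) n) = ‖T‖ ^ 2 := by
  constructor
  · constructor
    · rintro ⟨T, hT⟩
      exact ⟨‖T‖ ^ 2, by rintro - ⟨n, rfl⟩; exact truncNorm_le hrow hcol hT n⟩
    · intro hb
      exact ⟨TopM M hrow hcol hb, Top_represents hrow hcol hb⟩
  · intro T hT
    have hb : BddAbove (Set.range fun n => truncNorm (adjMulMatrix M) n) :=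
      ⟨‖T‖ ^ 2, by rintro - ⟨n, rfl⟩; exact truncNorm_le hrow hcol hT n⟩
    refine le_antisymm ?_ (opNorm_sq_le hrow hcol hT hb)
    exact ciSup_le fun n => truncNorm_le hrow hcol hT n
end
end

section
/- Let M : ℕ × ℕ → ℂ be an infinite matrix such that M_{kk} ≠ 0 for all k and δ := inf_k |M_{kk}| > 0. Let G be the infinite matrix with entries G_{jk} = M_{jk}/M_{kk} for j ≠ k and G_{jj} = 0 (so G is the matrix F D⁻¹, where D is the diagonal part and F the off-diagonal part of M). Assume that G defines a bounded operator on ℓ²(ℕ) and that I + G is invertible in the Banach algebra of bounded operators on ℓ²(ℕ). Let D be the (generally unbounded) diagonal operator D x = (M_{kk} x_k)_k with domain Dom(D) = { x ∈ ℓ²(ℕ) : (M_{kk} x_k)_k ∈ ℓ²(ℕ) }, and let L : Dom(D) → ℓ²(ℕ) be the linear map L x = (I + G)(D x). Then: (a) Dom(D) is dense in ℓ²(ℕ); (b) L is a bijection from Dom(D) onto ℓ²(ℕ) whose inverse is the bounded operator R = D′ ∘ (I + G)⁻¹, where D′ is the bounded diagonal operator with entries 1/M_{kk}; (c) if moreover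 |M_{kk}| → ∞ as k → ∞, then R is a compact operator on ℓ²(ℕ). -/
open Filter Topology
open scoped ENNReal NNReal

noncomputable section

local notation "H" => lp (fun _ : ℕ => ℂ) 2

lemma myMemℓp {a : ℕ → ℂ} {C : ℝ} (h : ∀ k, ‖a k‖ ≤ C) (x : H) :
    Memℓp (fun k => a k * x k) 2 := by
  have hC : 0 ≤ C := le_trans (norm_nonneg _) (h 0)
  apply memℓp_gen
  have hx : Summable fun k => ‖x k‖ ^ (2 : ℝ≥0∞).toReal := (lp.memℓp x).summable (by norm_num)
  refine Summable.of_nonneg_of_le (fun k => Real.rpow_nonneg (norm_nonneg _) _) (fun k => ?_)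
    (hx.mul_left (C ^ (2 : ℝ≥0∞).toReal))
  rw [← Real.mul_rpow hC (norm_nonneg _)]
  exact Real.rpow_le_rpow (norm_nonneg _)
    ((norm_mul_le _ _).trans (mul_le_mul_of_nonneg_right (h k) (norm_nonneg _)))
    (by norm_num)

lemma myNormLe {ε : ℝ} (hε : 0 ≤ ε) (f x : H) (h : ∀ k, ‖f k‖ ≤ ε * ‖x k‖) :
    ‖f‖ ≤ ε * ‖x‖ := by
  have h2 : (0:ℝ) < (2 : ℝ≥0∞).toReal := by norm_num
  refine lp.norm_le_of_forall_sum_le h2 (mul_nonneg hε (norm_nonneg _)) fun s => ?_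
  calc ∑ k ∈ s, ‖f k‖ ^ (2 : ℝ≥0∞).toReal
      ≤ ∑ k ∈ s, ε ^ (2 : ℝ≥0∞).toReal * ‖x k‖ ^ (2 : ℝ≥0∞).toReal := by
        refine Finset.sum_le_sum fun k _ => ?_
        rw [← Real.mul_rpow hε (norm_nonneg _)]
        exact Real.rpow_le_rpow (norm_nonneg _) (h k) h2.le
    _ = ε ^ (2 : ℝ≥0∞).toReal * ∑ k ∈ s, ‖x k‖ ^ (2 : ℝ≥0∞).toReal := (Finset.mul_sum _ _ _).symm
    _ ≤ ε ^ (2 : ℝ≥0∞).toReal * ‖x‖ ^ (2 : ℝ≥0∞).toReal :=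
        mul_le_mul_of_nonneg_left (lp.sum_rpow_le_norm_rpow h2 x s) (Real.rpow_nonneg hε _)
    _ = (ε * ‖x‖) ^ (2 : ℝ≥0∞).toReal := (Real.mul_rpow hε (norm_nonneg _)).symm

/-- diagonal multiplication operator on `ℓ²`. -/
def diagCLM (a : ℕ → ℂ) (C : ℝ) (h : ∀ k, ‖a k‖ ≤ C) : H →L[ℂ] H :=
  LinearMap.mkContinuous
    { toFun := fun x => (⟨fun k => a k * x k, myMemℓp h x⟩ : H)
      map_add' := fun x y => by
        refine lp.ext (funext fun k => ?_)
        simp only [lp.coeFn_add, Pi.add_apply]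
        exact mul_add _ _ _
      map_smul' := fun c x => by
        refine lp.ext (funext fun k => ?_)
        simp only [lp.coeFn_smul, Pi.smul_apply, smul_eq_mul, RingHom.id_apply]
        ring }
    C fun x => by
      refine myNormLe (le_trans (norm_nonneg _) (h 0)) _ x fun k => ?_
      show ‖a k * x k‖ ≤ C * ‖x k‖
      rw [norm_mul]
      exact mul_le_mul_of_nonneg_right (h k) (norm_nonneg _)

@[simp] lemma diagCLM_apply (a : ℕ → ℂ) (C : ℝ) (h : ∀ k, ‖a k‖ ≤ C) (x : H) (k : ℕ) :
    diagCLM a C h x k = a k * x k := rfl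

/-- coordinate evaluation as a continuous linear functional. -/
def evalCLM (i : ℕ) : H →L[ℂ] ℂ :=
  LinearMap.mkContinuous
    { toFun := fun x => x i
      map_add' := fun x y => by simp [lp.coeFn_add]
      map_smul' := fun c x => by simp [lp.coeFn_smul] }
    1 fun x => by rw [one_mul]; exact lp.norm_apply_le_norm (by norm_num) x i

lemma rankOne_compact (φ : H →L[ℂ] ℂ) (v : H) :
    IsCompactOperator (fun x : H => φ x • v) := by
  refine ⟨(fun c : ℂ => c • v) '' Metric.closedBall 0 1,
    (isCompact_closedBall 0 1).image (continuous_id.smul continuous_const), ?_⟩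
  have h0 : φ ⁻¹' Metric.closedBall 0 1 ∈ 𝓝 (0 : H) := by
    apply φ.continuous.continuousAt.preimage_mem_nhds
    rw [map_zero]
    exact Metric.closedBall_mem_nhds _ one_pos
  exact Filter.mem_of_superset h0 fun x hx => ⟨φ x, hx, rfl⟩

lemma sum_compact (s : Finset ℕ) (T : ℕ → (H → H)) (h : ∀ i, IsCompactOperator (T i)) :
    IsCompactOperator (fun x => ∑ i ∈ s, T i x) := by
  classical
  induction s using Finset.induction_on with
  | empty => simp only [Finset.sum_empty]; exact isCompactOperator_zero
  | insert _ _ hij ih =>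
      simp only [Finset.sum_insert hij]
      exact IsCompactOperator.add (h _) ih

/-- Lemma 5.5: if the diagonal of `M` is bounded away from zero and the matrix
`G = F D⁻¹` (off-diagonal part divided by the diagonal) defines a bounded operator `Gop` on
`ℓ²(ℕ)` such that `I + Gop` is invertible, then the operator `L x = (I + Gop)(D x)` with
domain `Dom(D) = {x : (M_{kk} x_k)_k ∈ ℓ²}` (which is dense) is a bijection onto `ℓ²(ℕ)`
whose inverse is the bounded operator `R = D′ ∘ (I + Gop)⁻¹`; if moreover `|M_{kk}| → ∞`,
then `R` is compact. -/
theorem diag_dominant_invertible (M : ℕ → ℕ → ℂ)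
    (hne : ∀ k, M k k ≠ 0) (δ : ℝ) (hδ : 0 < δ) (hdiag : ∀ k, δ ≤ ‖M k k‖)
    (G : ℕ → ℕ → ℂ) (hG : ∀ j k, G j k = if j = k then 0 else M j k / M k k)
    (Gop : lp (fun _ : ℕ => ℂ) 2 →L[ℂ] lp (fun _ : ℕ => ℂ) 2)
    (hGop : RepresentsMatrix G Gop)
    (hinv : IsUnit (1 + Gop)) :
    -- (a) the domain of the diagonal operator `D` is dense
    Dense {x : lp (fun _ : ℕ => ℂ) 2 | Memℓp (fun k => M k k * x k) 2} ∧
    -- (b) `L = (I + Gop) ∘ D` is a bijection from `Dom(D)` onto `ℓ²(ℕ)` with bounded inverse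
    --     `R = D′ ∘ (I + Gop)⁻¹`, where `D′` is the diagonal matrix with entries `1/M_{kk}`
    ∃ R : lp (fun _ : ℕ => ℂ) 2 →L[ℂ] lp (fun _ : ℕ => ℂ) 2,
      (∀ (y : lp (fun _ : ℕ => ℂ) 2) (k : ℕ),
        R y k = (M k k)⁻¹ * (Ring.inverse (1 + Gop) y) k) ∧
      (∀ (x : lp (fun _ : ℕ => ℂ) 2) (hx : Memℓp (fun k => M k k * x k) 2),
        R ((1 + Gop) (⟨fun k => M k k * x k, hx⟩ : lp (fun _ : ℕ => ℂ) 2)) = x) ∧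
      (∀ y : lp (fun _ : ℕ => ℂ) 2, ∃ hx : Memℓp (fun k => M k k * (R y) k) 2,
        (1 + Gop) (⟨fun k => M k k * (R y) k, hx⟩ : lp (fun _ : ℕ => ℂ) 2) = y) ∧
      -- (c) if `|M_{kk}| → ∞`, then `R` is a compact operator
      (Tendsto (fun k => ‖M k k‖) atTop atTop → IsCompactOperator ⇑R) := by
  classical
  have hδ' : (0:ℝ) ≤ δ⁻¹ := by positivity
  have hainv : ∀ k, ‖(M k k)⁻¹‖ ≤ δ⁻¹ := fun k => by
    rw [norm_inv]
    exact inv_anti₀ hδ (hdiag k)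
  set Dinv : H →L[ℂ] H := diagCLM (fun k => (M k k)⁻¹) δ⁻¹ hainv with hDinv
  set N : H →L[ℂ] H := Ring.inverse (1 + Gop) with hNdef
  have hN1 : N * (1 + Gop) = 1 := Ring.inverse_mul_cancel _ hinv
  have hN2 : (1 + Gop) * N = 1 := Ring.mul_inverse_cancel _ hinv
  refine ⟨?_, Dinv.comp N, fun y k => rfl, ?_, ?_, ?_⟩
  · -- density
    intro x
    have hs := lp.hasSum_single (E := fun _ : ℕ => ℂ) (p := 2) (by norm_num) x
    refine mem_closure_of_tendsto hs (Filter.Eventually.of_forall fun s => ?_)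
    show Memℓp (fun k => M k k * (∑ i ∈ s, lp.single 2 i (x i)) k) 2
    refine Memℓp.of_exponent_ge (memℓp_zero ?_) zero_le
    refine s.finite_toSet.subset fun k hk => ?_
    simp only [Set.mem_setOf_eq, ne_eq] at hk
    by_contra hks
    apply hk
    have hz : (∑ i ∈ s, lp.single (E := fun _ : ℕ => ℂ) 2 i (x i)) k = 0 := by
      rw [lp.coeFn_sum, Finset.sum_apply]
      exact Finset.sum_eq_zero fun i hi => lp.single_apply_ne 2 i _ (fun h => hks (h ▸ hi))
    rw [hz, mul_zero]
  · -- left inverse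
    intro x hx
    set z : H := ⟨fun k => M k k * x k, hx⟩ with hzdef
    have h1 : N ((1 + Gop) z) = z := by
      calc N ((1 + Gop) z) = (N * (1 + Gop)) z := rfl
        _ = (1 : H →L[ℂ] H) z := by rw [hN1]
        _ = z := rfl
    show Dinv (N ((1 + Gop) z)) = x
    rw [h1]
    refine lp.ext (funext fun k => ?_)
    show (M k k)⁻¹ * (M k k * x k) = x k
    rw [← mul_assoc, inv_mul_cancel₀ (hne k), one_mul]
  · -- right inverse
    intro y
    have hfun : (fun k => M k k * ((Dinv.comp N) y) k) = ⇑(N y) := by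
      funext k
      show M k k * ((M k k)⁻¹ * (N y) k) = (N y) k
      rw [← mul_assoc, mul_inv_cancel₀ (hne k), one_mul]
    refine ⟨hfun ▸ lp.memℓp (N y), ?_⟩
    have he : (⟨fun k => M k k * ((Dinv.comp N) y) k, hfun ▸ lp.memℓp (N y)⟩ : H) = N y :=
      lp.ext hfun
    rw [he]
    calc (1 + Gop) (N y) = ((1 + Gop) * N) y := rfl
      _ = (1 : H →L[ℂ] H) y := by rw [hN2]
      _ = y := rfl
  · -- compactness
    intro htend
    have hanorm : Tendsto (fun k => ‖(M k k)⁻¹‖) atTop (𝓝 0) := by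
      simp only [norm_inv]
      exact htend.inv_tendsto_atTop
    -- truncated diagonal operators
    have hbnd : ∀ n : ℕ, ∀ k, ‖(fun k => if k < n then (M k k)⁻¹ else 0) k‖ ≤ δ⁻¹ := by
      intro n k
      dsimp only
      split
      · exact hainv k
      · simpa using hδ'
    set Dn : ℕ → H →L[ℂ] H := fun n => diagCLM (fun k => if k < n then (M k k)⁻¹ else 0) δ⁻¹ (hbnd n)
      with hDn
    have hcomp : ∀ n, IsCompactOperator ⇑(Dn n) := by
      intro n
      have heq : ⇑(Dn n)
          = fun x => ∑ i ∈ Finset.range n, (evalCLM i x) • lp.single 2 i ((M i i)⁻¹) := by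
        funext x
        refine lp.ext (funext fun k => ?_)
        rw [lp.coeFn_sum, Finset.sum_apply]
        show (if k < n then (M k k)⁻¹ else 0) * x k = _
        by_cases hk : k < n
        · rw [if_pos hk,
            Finset.sum_eq_single_of_mem k (Finset.mem_range.2 hk)
              (fun i _ hik => by
                rw [lp.coeFn_smul, Pi.smul_apply, lp.single_apply_ne 2 i _ (Ne.symm hik),
                  smul_zero])]
          rw [lp.coeFn_smul, Pi.smul_apply, lp.single_apply_self]
          show (M k k)⁻¹ * x k = x k * (M k k)⁻¹
          ring
        · rw [if_neg hk, zero_mul]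
          refine (Finset.sum_eq_zero fun i hi => ?_).symm
          have : k ≠ i := fun h => hk (h ▸ Finset.mem_range.1 hi)
          rw [lp.coeFn_smul, Pi.smul_apply, lp.single_apply_ne 2 i _ this, smul_zero]
      rw [heq]
      exact sum_compact _ _ fun i => rankOne_compact (evalCLM i) _
    have htendD : Tendsto Dn atTop (𝓝 Dinv) := by
      rw [Metric.tendsto_atTop]
      intro ε hε
      obtain ⟨Nb, hNb⟩ := (Metric.tendsto_atTop.1 hanorm) (ε / 2) (by positivity)
      refine ⟨Nb, fun n hn => ?_⟩
      have hle : ‖Dn n - Dinv‖ ≤ ε / 2 := by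
        refine ContinuousLinearMap.opNorm_le_bound _ (by positivity) fun x => ?_
        refine myNormLe (by positivity) _ x fun k => ?_
        have hco : ((Dn n - Dinv) x) k = ((if k < n then (M k k)⁻¹ else 0) - (M k k)⁻¹) * x k := by
          rw [ContinuousLinearMap.sub_apply, lp.coeFn_sub, Pi.sub_apply]
          show (if k < n then (M k k)⁻¹ else 0) * x k - (M k k)⁻¹ * x k = _
          ring
        rw [hco, norm_mul]
        refine mul_le_mul_of_nonneg_right ?_ (norm_nonneg _)
        by_cases hk : k < n
        · rw [if_pos hk, sub_self, norm_zero]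
          positivity
        · rw [if_neg hk, zero_sub, norm_neg]
          have hkN : Nb ≤ k := le_trans hn (le_of_not_gt hk)
          have := hNb k hkN
          rw [Real.dist_eq, sub_zero, abs_of_nonneg (norm_nonneg _)] at this
          exact this.le
      calc dist (Dn n) Dinv = ‖Dn n - Dinv‖ := dist_eq_norm _ _
        _ ≤ ε / 2 := hle
        _ < ε := by linarith
    have hDC : IsCompactOperator ⇑Dinv :=
      isCompactOperator_of_tendsto htendD (Filter.Eventually.of_forall hcomp)
    exact hDC.comp_clm N
end
end

section
/- Let M : ℕ × ℕ → ℂ be an infinite matrix such that a₁ := sup_j ∑_k |M_{jk}| < ∞ (the supremum of the ℓ¹-norms of the rows) and a₂ := sup_k ∑_j |M_{jk}| < ∞ (the supremum of the ℓ¹-norms of the columns). Then M defines a bounded operator T on ℓ²(ℕ), and ‖T‖ ≤ √(a₁ · a₂). -/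
open Filter Topology ENNReal

set_option maxHeartbeats 1000000
noncomputable section

theorem schur_key (M : ℕ → ℕ → ℂ)
    (hrow : ∀ j, Summable fun k => ‖M j k‖)
    (hcol : ∀ k, Summable fun j => ‖M j k‖)
    (h₁ : BddAbove (Set.range fun j => ∑' k, ‖M j k‖))
    (h₂ : BddAbove (Set.range fun k => ∑' j, ‖M j k‖))
    (x : lp (fun _ : ℕ => ℂ) 2) :
    (∀ j, Summable fun k => ‖M j k‖ * ‖x k‖) ∧
    Summable (fun j => (∑' k, ‖M j k‖ * ‖x k‖) ^ 2) ∧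
    (∑' j, (∑' k, ‖M j k‖ * ‖x k‖) ^ 2) ≤
      (⨆ j, ∑' k, ‖M j k‖) * (⨆ k, ∑' j, ‖M j k‖) * ‖x‖ ^ 2 := by
  set a₁ := ⨆ j, ∑' k, ‖M j k‖ with ha₁
  set a₂ := ⨆ k, ∑' j, ‖M j k‖ with ha₂
  have hA1 : ∀ j, ∑' k, ‖M j k‖ ≤ a₁ := fun j => le_ciSup h₁ j
  have hA2 : ∀ k, ∑' j, ‖M j k‖ ≤ a₂ := fun k => le_ciSup h₂ k
  have ha₁0 : 0 ≤ a₁ := le_trans (tsum_nonneg fun _ => norm_nonneg _) (hA1 0)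
  have ha₂0 : 0 ≤ a₂ := le_trans (tsum_nonneg fun _ => norm_nonneg _) (hA2 0)
  have hxpt : ∀ k, ‖x k‖ ≤ ‖x‖ := fun k => lp.norm_apply_le_norm two_ne_zero x k
  have h2 : ((2 : ℝ≥0∞)).toReal = 2 := by simp
  have hx2' : Summable fun k => ‖x k‖ ^ (2 : ℝ) := by
    simpa [h2] using (lp.memℓp x).summable (by simp [h2])
  have hx2 : Summable fun k => ‖x k‖ ^ 2 := by
    simpa [Real.rpow_two] using hx2'
  have hxs : ∀ j, Summable fun k => ‖M j k‖ * ‖x k‖ := by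
    intro j
    refine ((hrow j).mul_right ‖x‖).of_nonneg_of_le
      (fun k => mul_nonneg (norm_nonneg _) (norm_nonneg _)) ?_
    exact fun k => mul_le_mul_of_nonneg_left (hxpt k) (norm_nonneg _)
  refine ⟨hxs, ?_⟩
  have hS : ∀ j, Summable fun k => ‖M j k‖ * ‖x k‖ ^ 2 := by
    intro j
    refine ((hrow j).mul_right (‖x‖ ^ 2)).of_nonneg_of_le
      (fun k => mul_nonneg (norm_nonneg _) (sq_nonneg _)) ?_
    intro k
    exact mul_le_mul_of_nonneg_left
      (pow_le_pow_left₀ (norm_nonneg _) (hxpt k) 2) (norm_nonneg _)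
  have hCS : ∀ j, (∑' k, ‖M j k‖ * ‖x k‖) ^ 2 ≤ a₁ * ∑' k, ‖M j k‖ * ‖x k‖ ^ 2 := by
    intro j
    have key : ∀ s : Finset ℕ,
        (∑ k ∈ s, ‖M j k‖ * ‖x k‖) ^ 2 ≤ a₁ * ∑' k, ‖M j k‖ * ‖x k‖ ^ 2 := by
      intro s
      have cs := Finset.sum_sq_le_sum_mul_sum_of_sq_eq_mul s
        (f := fun k => ‖M j k‖) (g := fun k => ‖M j k‖ * ‖x k‖ ^ 2)
        (r := fun k => ‖M j k‖ * ‖x k‖)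
        (fun k _ => norm_nonneg _)
        (fun k _ => mul_nonneg (norm_nonneg _) (sq_nonneg _))
        (fun k _ => by ring)
      refine cs.trans (mul_le_mul ?_ ?_ ?_ ha₁0)
      · exact le_trans (Summable.sum_le_tsum s (fun k _ => norm_nonneg _) (hrow j)) (hA1 j)
      · exact Summable.sum_le_tsum s (fun k _ => mul_nonneg (norm_nonneg _) (sq_nonneg _)) (hS j)
      · exact Finset.sum_nonneg fun k _ => mul_nonneg (norm_nonneg _) (sq_nonneg _)
    have hlim : Tendsto (fun s : Finset ℕ => (∑ k ∈ s, ‖M j k‖ * ‖x k‖) ^ 2)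
        atTop (𝓝 ((∑' k, ‖M j k‖ * ‖x k‖) ^ 2)) :=
      ((continuous_pow 2).continuousAt.tendsto).comp (hxs j).hasSum
    exact le_of_tendsto hlim (Eventually.of_forall key)
  have hFswap : Summable fun p : ℕ × ℕ => ‖M p.2 p.1‖ * ‖x p.1‖ ^ 2 := by
    rw [summable_prod_of_nonneg (fun p => mul_nonneg (norm_nonneg _) (sq_nonneg _))]
    constructor
    · intro k
      simp only
      exact (hcol k).mul_right _
    · simp only
      apply (hx2.mul_left a₂).of_nonneg_of_le
        (fun k => tsum_nonneg fun j => mul_nonneg (norm_nonneg _) (sq_nonneg _))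
      intro k
      rw [tsum_mul_right]
      exact mul_le_mul_of_nonneg_right (hA2 k) (sq_nonneg _)
  have hF : Summable fun p : ℕ × ℕ => ‖M p.1 p.2‖ * ‖x p.2‖ ^ 2 :=
    hFswap.prod_symm
  have hSsum : Summable fun j => ∑' k, ‖M j k‖ * ‖x k‖ ^ 2 :=
    ((summable_prod_of_nonneg
      (f := fun p : ℕ × ℕ => ‖M p.1 p.2‖ * ‖x p.2‖ ^ 2)
      (fun p => mul_nonneg (norm_nonneg _) (sq_nonneg _))).1 hF).2
  have hg2sum : Summable fun j => (∑' k, ‖M j k‖ * ‖x k‖) ^ 2 :=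
    (hSsum.mul_left a₁).of_nonneg_of_le (fun j => sq_nonneg _) hCS
  refine ⟨hg2sum, ?_⟩
  have hSsum' : Summable fun k => ∑' j, ‖M j k‖ * ‖x k‖ ^ 2 :=
    ((summable_prod_of_nonneg
      (f := fun p : ℕ × ℕ => ‖M p.2 p.1‖ * ‖x p.1‖ ^ 2)
      (fun p => mul_nonneg (norm_nonneg _) (sq_nonneg _))).1 hFswap).2
  have hswap : ∑' j, ∑' k, ‖M j k‖ * ‖x k‖ ^ 2 = ∑' k, ∑' j, ‖M j k‖ * ‖x k‖ ^ 2 :=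
    Summable.tsum_comm hFswap
  have hxn : ‖x‖ ^ 2 = ∑' k, ‖x k‖ ^ 2 := by
    have := lp.norm_rpow_eq_tsum (p := 2) (by simp [h2]) x
    rw [h2] at this
    simpa [Real.rpow_two] using this
  have step1 : ∑' j, (∑' k, ‖M j k‖ * ‖x k‖) ^ 2
      ≤ a₁ * ∑' j, ∑' k, ‖M j k‖ * ‖x k‖ ^ 2 := by
    rw [← tsum_mul_left]
    exact Summable.tsum_le_tsum hCS hg2sum (hSsum.mul_left a₁)
  have step2 : ∑' j, ∑' k, ‖M j k‖ * ‖x k‖ ^ 2 ≤ a₂ * ‖x‖ ^ 2 := by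
    rw [hswap, hxn, ← tsum_mul_left]
    refine Summable.tsum_le_tsum ?_ hSsum' (hx2.mul_left a₂)
    intro k
    rw [tsum_mul_right]
    exact mul_le_mul_of_nonneg_right (hA2 k) (sq_nonneg _)
  calc ∑' j, (∑' k, ‖M j k‖ * ‖x k‖) ^ 2 ≤ a₁ * (a₂ * ‖x‖ ^ 2) :=
        step1.trans (mul_le_mul_of_nonneg_left step2 ha₁0)
    _ = a₁ * a₂ * ‖x‖ ^ 2 := by ring

/-- Schur-type interpolation bound (cf. proof of Theorem 5.11):
if the rows of `M` have uniformly bounded `ℓ¹`-norms with supremum `a₁` and the columns have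
uniformly bounded `ℓ¹`-norms with supremum `a₂`, then `M` defines a bounded operator `T` on
`ℓ²(ℕ)` with `‖T‖ ≤ √(a₁ a₂)`. -/
theorem schur_interpolation_bound (M : ℕ → ℕ → ℂ)
    (hrow : ∀ j, Summable fun k => ‖M j k‖)
    (hcol : ∀ k, Summable fun j => ‖M j k‖)
    (h₁ : BddAbove (Set.range fun j => ∑' k, ‖M j k‖))
    (h₂ : BddAbove (Set.range fun k => ∑' j, ‖M j k‖)) :
    ∃ T : lp (fun _ : ℕ => ℂ) 2 →L[ℂ] lp (fun _ : ℕ => ℂ) 2,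
      RepresentsMatrix M T ∧
      ‖T‖ ≤ Real.sqrt ((⨆ j, ∑' k, ‖M j k‖) * (⨆ k, ∑' j, ‖M j k‖)) := by
  set a₁ := ⨆ j, ∑' k, ‖M j k‖ with ha₁
  set a₂ := ⨆ k, ∑' j, ‖M j k‖ with ha₂
  have ha₁0 : 0 ≤ a₁ :=
    le_trans (tsum_nonneg fun _ => norm_nonneg _) (le_ciSup h₁ 0)
  have ha₂0 : 0 ≤ a₂ :=
    le_trans (tsum_nonneg fun _ => norm_nonneg _) (le_ciSup h₂ 0)
  have h2 : ((2 : ℝ≥0∞)).toReal = 2 := by simp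
  -- the key estimates
  have key := fun x => schur_key M hrow hcol h₁ h₂ x
  -- summability of each row paired with x
  have hxsum : ∀ (x : lp (fun _ : ℕ => ℂ) 2) (j : ℕ),
      Summable fun k => M j k * x k := by
    intro x j
    apply Summable.of_norm
    simpa [norm_mul] using (key x).1 j
  -- pointwise norm bound
  have hpt : ∀ (x : lp (fun _ : ℕ => ℂ) 2) (j : ℕ),
      ‖∑' k, M j k * x k‖ ≤ ∑' k, ‖M j k‖ * ‖x k‖ := by
    intro x j
    have := norm_tsum_le_tsum_norm (f := fun k => M j k * x k)
      (by simpa [norm_mul] using (key x).1 j)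
    simpa [norm_mul] using this
  -- membership in ℓ²
  have hmem : ∀ x : lp (fun _ : ℕ => ℂ) 2,
      Memℓp (fun j => ∑' k, M j k * x k) 2 := by
    intro x
    apply memℓp_gen
    rw [h2]
    have : Summable fun j => (∑' k, ‖M j k‖ * ‖x k‖) ^ 2 := (key x).2.1
    have hsum2 : Summable fun j => ‖∑' k, M j k * x k‖ ^ 2 :=
      this.of_nonneg_of_le (fun j => sq_nonneg _)
        (fun j => pow_le_pow_left₀ (norm_nonneg _) (hpt x j) 2)
    simpa [Real.rpow_two] using hsum2
  -- the linear map
  let L : lp (fun _ : ℕ => ℂ) 2 →ₗ[ℂ] lp (fun _ : ℕ => ℂ) 2 :=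
    { toFun := fun x => ⟨fun j => ∑' k, M j k * x k, hmem x⟩
      map_add' := by
        intro x y
        ext j
        simp only [lp.coeFn_add, Pi.add_apply]
        rw [← Summable.tsum_add (hxsum x j) (hxsum y j)]
        congr 1
        ext k
        simp only [lp.coeFn_add, Pi.add_apply]
        ring
      map_smul' := by
        intro c x
        ext j
        simp only [lp.coeFn_smul, Pi.smul_apply, RingHom.id_apply, smul_eq_mul]
        rw [← tsum_mul_left]
        congr 1
        ext k
        ring }
  -- norm bound for L
  have hbound : ∀ x : lp (fun _ : ℕ => ℂ) 2,
      ‖L x‖ ≤ Real.sqrt (a₁ * a₂) * ‖x‖ := by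
    intro x
    refine lp.norm_le_of_tsum_le (by rw [h2]; norm_num)
      (mul_nonneg (Real.sqrt_nonneg _) (norm_nonneg _)) ?_
    rw [h2]
    have hC : (Real.sqrt (a₁ * a₂) * ‖x‖) ^ (2 : ℝ) = a₁ * a₂ * ‖x‖ ^ 2 := by
      rw [Real.rpow_two, mul_pow, Real.sq_sqrt (mul_nonneg ha₁0 ha₂0)]
    rw [hC]
    have hsum2 : Summable fun j => ‖∑' k, M j k * x k‖ ^ 2 :=
      (key x).2.1.of_nonneg_of_le (fun j => sq_nonneg _)
        (fun j => pow_le_pow_left₀ (norm_nonneg _) (hpt x j) 2)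
    have step : ∑' j, ‖∑' k, M j k * x k‖ ^ 2 ≤ ∑' j, (∑' k, ‖M j k‖ * ‖x k‖) ^ 2 :=
      Summable.tsum_le_tsum (fun j => pow_le_pow_left₀ (norm_nonneg _) (hpt x j) 2)
        hsum2 (key x).2.1
    have : ∑' j, ‖(L x : ℕ → ℂ) j‖ ^ (2 : ℝ) = ∑' j, ‖∑' k, M j k * x k‖ ^ 2 := by
      congr 1
      ext j
      rw [Real.rpow_two]
      rfl
    rw [this]
    exact step.trans (key x).2.2
  refine ⟨LinearMap.mkContinuous L (Real.sqrt (a₁ * a₂)) hbound, ?_, ?_⟩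
  · intro x j
    constructor
    · simpa [norm_mul] using (key x).1 j
    · rfl
  · exact LinearMap.mkContinuous_norm_le L (Real.sqrt_nonneg _) hbound
end
end

section
/- Let H be a complex Hilbert space and let (u_n)_{n∈ℕ} and (v_n)_{n∈ℕ} be two Riesz bases of H that are biorthogonal to each other, i.e. ⟨u_m, v_n⟩ = δ_{mn} for all m, n. Let A be a bounded linear operator on H and σ : ℕ → ℂ. Then ⟨A f, v_n⟩ = σ(n) ⟨f, v_n⟩ holds for all f ∈ H and all n if and only if ⟨A* g, u_n⟩ = conj(σ(n)) ⟨g, u_n⟩ holds for all g ∈ H and all n, where A* is the Hilbert-space adjoint of A. -/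
open Filter Topology

noncomputable section

lemma dense_span_inner_zero {H : Type*} [NormedAddCommGroup H] [InnerProductSpace ℂ H]
    [CompleteSpace H] (w : ℕ → H)
    (hd : Dense (↑(Submodule.span ℂ (Set.range w)) : Set H)) (x : H)
    (hx : ∀ n, (inner ℂ x (w n) : ℂ) = 0) : x = 0 := by
  have hmem : x ∈ (Submodule.span ℂ (Set.range w))ᗮ := by
    rw [Submodule.mem_orthogonal]
    intro y hy
    induction hy using Submodule.span_induction with
    | mem z hz => obtain ⟨n, rfl⟩ := hz
                  have := hx n
                  rw [← inner_conj_symm] at this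
                  simpa using congrArg (starRingEnd ℂ) this
    | zero => simp
    | add a b _ _ ha hb => rw [inner_add_left, ha, hb]; ring
    | smul c a _ ha => rw [inner_smul_left, ha]; ring
  have hbot : (Submodule.span ℂ (Set.range w))ᗮ = ⊥ :=
    Submodule.topologicalClosure_eq_top_iff.mp
      (Submodule.dense_iff_topologicalClosure_eq_top.mp hd)
  simpa [hbot] using hmem

/-- Theorem 3.23: let `(u_n)` and `(v_n)` be two biorthogonal Riesz bases of the complex Hilbert
space `H`, `A` a bounded operator on `H`, and `σ : ℕ → ℂ`. Then `A` is an `𝔏`-Fourier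
multiplier by `σ` (i.e. `⟨A f, vₙ⟩ = σ(n) ⟨f, vₙ⟩` for all `f, n`) iff its adjoint `A*` is an
`𝔏*`-Fourier multiplier by `conj σ` (i.e. `⟨A* g, uₙ⟩ = conj(σ(n)) ⟨g, uₙ⟩` for all `g, n`). -/
theorem fourier_multiplier_adjoint
    {H : Type*} [NormedAddCommGroup H] [InnerProductSpace ℂ H] [CompleteSpace H]
    (u v : ℕ → H)
    (cu Cu : ℝ) (hcu : 0 < cu) (hcuCu : cu ≤ Cu)
    (hudense : Dense (↑(Submodule.span ℂ (Set.range u)) : Set H))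
    (hulower : ∀ (s : Finset ℕ) (a : ℕ → ℂ),
      cu * ∑ n ∈ s, ‖a n‖ ^ 2 ≤ ‖∑ n ∈ s, a n • u n‖ ^ 2)
    (huupper : ∀ (s : Finset ℕ) (a : ℕ → ℂ),
      ‖∑ n ∈ s, a n • u n‖ ^ 2 ≤ Cu * ∑ n ∈ s, ‖a n‖ ^ 2)
    (cv Cv : ℝ) (hcv : 0 < cv) (hcvCv : cv ≤ Cv)
    (hvdense : Dense (↑(Submodule.span ℂ (Set.range v)) : Set H))
    (hvlower : ∀ (s : Finset ℕ) (a : ℕ → ℂ),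
      cv * ∑ n ∈ s, ‖a n‖ ^ 2 ≤ ‖∑ n ∈ s, a n • v n‖ ^ 2)
    (hvupper : ∀ (s : Finset ℕ) (a : ℕ → ℂ),
      ‖∑ n ∈ s, a n • v n‖ ^ 2 ≤ Cv * ∑ n ∈ s, ‖a n‖ ^ 2)
    (hbiorth : ∀ m n, (inner ℂ (u m) (v n) : ℂ) = if m = n then 1 else 0)
    (A : H →L[ℂ] H) (σ : ℕ → ℂ) :
    (∀ (f : H) (n : ℕ), (inner ℂ (A f) (v n) : ℂ) = σ n * (inner ℂ f (v n) : ℂ)) ↔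
    (∀ (g : H) (n : ℕ),
      (inner ℂ (ContinuousLinearMap.adjoint A g) (u n) : ℂ) =
        (starRingEnd ℂ) (σ n) * (inner ℂ g (u n) : ℂ)) := by
  constructor
  · intro h1
    -- First show A uₙ = conj σₙ • uₙ using density of span v.
    have hAu : ∀ n, A (u n) = (starRingEnd ℂ) (σ n) • u n := by
      intro n
      have hz : A (u n) - (starRingEnd ℂ) (σ n) • u n = 0 := by
        apply dense_span_inner_zero v hvdense
        intro m
        rw [inner_sub_left, inner_smul_left, h1 (u n) m, hbiorth n m]
        by_cases hnm : n = m
        · subst hnm; simp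
        · simp [hnm]
      linear_combination (norm := module) hz
    intro g n
    have : (inner ℂ (A (u n)) g : ℂ) = σ n * (inner ℂ (u n) g : ℂ) := by
      rw [hAu n, inner_smul_left]; simp
    calc (inner ℂ (ContinuousLinearMap.adjoint A g) (u n) : ℂ)
        = (starRingEnd ℂ) (inner ℂ (u n) (ContinuousLinearMap.adjoint A g) : ℂ) := by
          rw [inner_conj_symm]
      _ = (starRingEnd ℂ) (inner ℂ (A (u n)) g : ℂ) := by
          rw [ContinuousLinearMap.adjoint_inner_right]
      _ = (starRingEnd ℂ) (σ n * (inner ℂ (u n) g : ℂ)) := by rw [this]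
      _ = (starRingEnd ℂ) (σ n) * (inner ℂ g (u n) : ℂ) := by
          rw [map_mul, inner_conj_symm]
  · intro h2
    -- First show A* vₙ = σₙ • vₙ using density of span u.
    have hAv : ∀ n, ContinuousLinearMap.adjoint A (v n) = σ n • v n := by
      intro n
      have hz : ContinuousLinearMap.adjoint A (v n) - σ n • v n = 0 := by
        apply dense_span_inner_zero u hudense
        intro m
        have hvu : ∀ m, (inner ℂ (v n) (u m) : ℂ) = if m = n then 1 else 0 := by
          intro m
          rw [← inner_conj_symm, hbiorth m n]
          by_cases hmn : m = n <;> simp [hmn]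
        rw [inner_sub_left, inner_smul_left, h2 (v n) m, hvu m]
        by_cases hmn : m = n
        · subst hmn; simp
        · simp [hmn]
      linear_combination (norm := module) hz
    intro f n
    calc (inner ℂ (A f) (v n) : ℂ)
        = (starRingEnd ℂ) (inner ℂ (v n) (A f) : ℂ) := by rw [inner_conj_symm]
      _ = (starRingEnd ℂ) (inner ℂ (ContinuousLinearMap.adjoint A (v n)) f : ℂ) := by
          rw [ContinuousLinearMap.adjoint_inner_left]
      _ = (starRingEnd ℂ) (inner ℂ ((σ n : ℂ) • v n) f : ℂ) := by rw [hAv n]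
      _ = σ n * (inner ℂ f (v n) : ℂ) := by
          rw [inner_smul_left, map_mul, inner_conj_symm]; simp
end
end

section
/- Let H be a complex Hilbert space and let (w_n)_{n∈ℕ} ⊂ H be a family for which there exist constants 0 < k ≤ K such that for every square-summable complex sequence (a_n) the series ∑_n a_n w_n converges in H and k ∑_n |a_n|² ≤ ‖∑_n a_n w_n‖² ≤ K ∑_n |a_n|². Let χ : ℕ → ℂ be a sequence whose real parts are uniformly bounded from below: Re χ_n ≥ −C₀ for all n and some C₀ ≥ 0. Then for every square-summable complex sequence (f_n) and every t ≥ 0, the sequence (e^{−χ_n t} f_n)_n is square-summable, the series f_t := ∑_n e^{−χ_n t} f_n w_n converges in H, and ‖f_t‖² ≤ (K/k) e^{2 C₀ t} ‖f₀‖², where f₀ = ∑_n f_n w_n. -/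
open Filter Topology

noncomputable section

/-- Hilbert-space form of Proposition 5.19: if `(w_n)` satisfies a two-sided Riesz inequality
`k ∑|aₙ|² ≤ ‖∑ aₙ wₙ‖² ≤ K ∑|aₙ|²` for all `ℓ²` coefficient sequences, and the real parts of
`χ_n` are uniformly bounded from below by `−C₀`, then for every `ℓ²` coefficient sequence
`(f_n)` and every `t ≥ 0` the sequence `(e^{−χₙ t} fₙ)ₙ` is again in `ℓ²`, the series
`f_t = ∑ₙ e^{−χₙ t} fₙ wₙ` converges in `H`, and `‖f_t‖² ≤ (K/k) e^{2C₀t} ‖f₀‖²`. -/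
theorem heat_semigroup_stability
    {H : Type*} [NormedAddCommGroup H] [InnerProductSpace ℂ H] [CompleteSpace H]
    (w : ℕ → H) (k K : ℝ) (hk : 0 < k) (hkK : k ≤ K)
    (hw : ∀ a : ℕ → ℂ, Summable (fun n => ‖a n‖ ^ 2) →
      Summable (fun n => a n • w n) ∧
      k * ∑' n, ‖a n‖ ^ 2 ≤ ‖∑' n, a n • w n‖ ^ 2 ∧
      ‖∑' n, a n • w n‖ ^ 2 ≤ K * ∑' n, ‖a n‖ ^ 2)
    (χ : ℕ → ℂ) (C₀ : ℝ) (hC₀ : 0 ≤ C₀) (hre : ∀ n, -C₀ ≤ (χ n).re) :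
    ∀ f : ℕ → ℂ, Summable (fun n => ‖f n‖ ^ 2) → ∀ t : ℝ, 0 ≤ t →
      Summable (fun n => ‖Complex.exp (-χ n * t) * f n‖ ^ 2) ∧
      Summable (fun n => (Complex.exp (-χ n * t) * f n) • w n) ∧
      ‖∑' n, (Complex.exp (-χ n * t) * f n) • w n‖ ^ 2 ≤
        K / k * Real.exp (2 * C₀ * t) * ‖∑' n, f n • w n‖ ^ 2 := by
  intro f hf t ht
  -- bound on the exponential factor
  have hexp : ∀ n, ‖Complex.exp (-χ n * t) * f n‖ ^ 2 ≤ Real.exp (2 * C₀ * t) * ‖f n‖ ^ 2 := by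
    intro n
    have h1 : ‖Complex.exp (-χ n * t)‖ = Real.exp (-(χ n).re * t) := by
      rw [Complex.norm_exp]
      congr 1
      simp [Complex.mul_re]
    have h2 : Real.exp (-(χ n).re * t) ≤ Real.exp (C₀ * t) := by
      apply Real.exp_le_exp.2
      apply mul_le_mul_of_nonneg_right _ ht
      linarith [hre n]
    calc ‖Complex.exp (-χ n * t) * f n‖ ^ 2
        = ‖Complex.exp (-χ n * t)‖ ^ 2 * ‖f n‖ ^ 2 := by rw [norm_mul, mul_pow]
      _ ≤ Real.exp (C₀ * t) ^ 2 * ‖f n‖ ^ 2 := by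
          apply mul_le_mul_of_nonneg_right _ (sq_nonneg _)
          have := (h1 ▸ h2)
          exact pow_le_pow_left₀ (norm_nonneg _) this 2
      _ = Real.exp (2 * C₀ * t) * ‖f n‖ ^ 2 := by
          rw [← Real.exp_nat_mul]; ring_nf
  have hsum : Summable (fun n => ‖Complex.exp (-χ n * t) * f n‖ ^ 2) := by
    apply Summable.of_nonneg_of_le (fun n => sq_nonneg _) hexp (hf.mul_left _)
  obtain ⟨hconv, hlow, hup⟩ := hw _ hsum
  obtain ⟨hconv0, hlow0, hup0⟩ := hw f hf
  refine ⟨hsum, hconv, ?_⟩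
  have hts : (∑' n, ‖Complex.exp (-χ n * t) * f n‖ ^ 2) ≤
      Real.exp (2 * C₀ * t) * ∑' n, ‖f n‖ ^ 2 := by
    rw [← tsum_mul_left]
    exact Summable.tsum_le_tsum hexp hsum (hf.mul_left _)
  have hf0 : (∑' n, ‖f n‖ ^ 2) ≤ (1 / k) * ‖∑' n, f n • w n‖ ^ 2 := by
    rw [div_mul_eq_mul_div, le_div_iff₀ hk, one_mul, mul_comm]
    exact hlow0
  calc ‖∑' n, (Complex.exp (-χ n * t) * f n) • w n‖ ^ 2
      ≤ K * ∑' n, ‖Complex.exp (-χ n * t) * f n‖ ^ 2 := hup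
    _ ≤ K * (Real.exp (2 * C₀ * t) * ∑' n, ‖f n‖ ^ 2) := by
        apply mul_le_mul_of_nonneg_left hts (le_trans hk.le hkK)
    _ ≤ K * (Real.exp (2 * C₀ * t) * ((1 / k) * ‖∑' n, f n • w n‖ ^ 2)) := by
        apply mul_le_mul_of_nonneg_left _ (le_trans hk.le hkK)
        exact mul_le_mul_of_nonneg_left hf0 (Real.exp_nonneg _)
    _ = K / k * Real.exp (2 * C₀ * t) * ‖∑' n, f n • w n‖ ^ 2 := by ring
end
end
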